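/- arXiv:2605.13812 — 4 statements merged into one kernel-verified Lean document; each statement's English description precedes it below -/
import Mathlib

section
/- Let m be a positive integer and let Q be an m×m real symmetric matrix that is negative definite, irreducible, and has nonnegative off-diagonal entries (Q i j ≥ 0 for all i ≠ j). Let A = Q⁻¹ and define the quadratic form F(V) = Vᵀ A V for V ∈ ℝ^m. Fix W ∈ ℝ^m with all entries nonnegative. Then for every V ∈ ℝ^m satisfying |V i| ≤ W i for every index i, one has F(W) ≤ F(V); that is, F restricted to the box D_W = {V : |V i| ≤ W i for all i} attains its minimum at W. -/
open Matrix

/-- An `m × m` real matrix is irreducible if there is no nonempty proper subset `S`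
of the index set such that `Q i j = 0` for all `i ∈ S` and `j ∉ S`. -/
def Matrix.IsIrreducible' {m : ℕ} (Q : Matrix (Fin m) (Fin m) ℝ) : Prop :=
  ¬ ∃ S : Set (Fin m), S.Nonempty ∧ S ≠ Set.univ ∧ ∀ i ∈ S, ∀ j ∉ S, Q i j = 0

theorem stmt_0 (m : ℕ) (hm : 0 < m) (Q : Matrix (Fin m) (Fin m) ℝ)
    (hsym : Q.IsSymm)
    (hnegdef : ∀ V : Fin m → ℝ, V ≠ 0 → V ⬝ᵥ Q.mulVec V < 0)
    (hirr : Q.IsIrreducible')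
    (hoff : ∀ i j : Fin m, i ≠ j → 0 ≤ Q i j)
    (W : Fin m → ℝ) (hW : ∀ i, 0 ≤ W i)
    (V : Fin m → ℝ) (hV : ∀ i, |V i| ≤ W i) :
    W ⬝ᵥ (Q⁻¹).mulVec W ≤ V ⬝ᵥ (Q⁻¹).mulVec V := by
  -- Q is invertible
  have hdet : IsUnit Q.det := by
    rw [isUnit_iff_ne_zero]
    intro h
    obtain ⟨v, hv, hv0⟩ := (Matrix.exists_mulVec_eq_zero_iff).2 h
    have := hnegdef v hv
    rw [hv0] at this
    simp at this
  have hQinv : Q * Q⁻¹ = 1 := Matrix.mul_nonsing_inv Q hdet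
  -- Key: Q⁻¹ maps nonnegative vectors to nonpositive vectors
  have key : ∀ b : Fin m → ℝ, (∀ i, 0 ≤ b i) → ∀ i, (Q⁻¹).mulVec b i ≤ 0 := by
    intro b hb
    set x := (Q⁻¹).mulVec b with hx
    have hQx : Q.mulVec x = b := by
      rw [hx, Matrix.mulVec_mulVec, hQinv, Matrix.one_mulVec]
    by_contra hcon
    push_neg at hcon
    obtain ⟨i0, hi0⟩ := hcon
    set y : Fin m → ℝ := fun i => max (x i) 0 with hy
    set z : Fin m → ℝ := fun i => max (-(x i)) 0 with hz
    have hyn : ∀ i, 0 ≤ y i := fun i => le_max_right _ _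
    have hzn : ∀ i, 0 ≤ z i := fun i => le_max_right _ _
    have hyz : x = y - z := by
      funext i
      simp only [hy, hz, Pi.sub_apply]
      rcases le_total (x i) 0 with h | h
      · rw [max_eq_right h, max_eq_left (by linarith)]; ring
      · rw [max_eq_left h, max_eq_right (by linarith)]; ring
    have hyzmul : ∀ i, y i * z i = 0 := by
      intro i
      rcases le_total (x i) 0 with h | h
      · simp [hy, max_eq_right h]
      · simp [hz, max_eq_right (by linarith : -(x i) ≤ 0)]
    have hy0 : y ≠ 0 := by
      intro h
      have : y i0 = 0 := by rw [h]; rfl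
      have : (0:ℝ) < y i0 := lt_max_of_lt_left hi0
      linarith [this, (by rw [h]; rfl : y i0 = (0:ℝ))]
    have h1 : y ⬝ᵥ Q.mulVec y < 0 := hnegdef y hy0
    have h2 : 0 ≤ y ⬝ᵥ Q.mulVec z := by
      simp only [dotProduct, Matrix.mulVec, Finset.mul_sum]
      apply Finset.sum_nonneg
      intro i _
      apply Finset.sum_nonneg
      intro j _
      by_cases h : i = j
      · subst h
        have h0 : y i * (Q i i * z i) = Q i i * (y i * z i) := by ring
        rw [h0, hyzmul i, mul_zero]
      · have := hoff i j h
        positivity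
    have h3 : 0 ≤ y ⬝ᵥ b := by
      apply Finset.sum_nonneg
      intro i _
      exact mul_nonneg (hyn i) (hb i)
    have h4 : y ⬝ᵥ Q.mulVec x = y ⬝ᵥ Q.mulVec y - y ⬝ᵥ Q.mulVec z := by
      rw [hyz, Matrix.mulVec_sub, dotProduct_sub]
    rw [hQx] at h4
    linarith
  -- entries of Q⁻¹ are nonpositive
  have hA : ∀ i j, Q⁻¹ i j ≤ 0 := by
    intro i j
    have hb : ∀ k : Fin m, (0:ℝ) ≤ (Pi.single j (1:ℝ) : Fin m → ℝ) k := by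
      intro k
      by_cases h : k = j
      · subst h; rw [Pi.single_eq_same]; norm_num
      · rw [Pi.single_eq_of_ne h]
    have := key (Pi.single j (1:ℝ)) (fun k => hb k) i
    simpa using this
  -- compare quadratic forms termwise
  have expand : ∀ U : Fin m → ℝ,
      U ⬝ᵥ (Q⁻¹).mulVec U = ∑ i, ∑ j, Q⁻¹ i j * (U i * U j) := by
    intro U
    simp only [dotProduct, Matrix.mulVec, Finset.mul_sum]
    congr 1; funext i; congr 1; funext j; ring
  rw [expand, expand]
  apply Finset.sum_le_sum
  intro i _
  apply Finset.sum_le_sum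
  intro j _
  have hVV : V i * V j ≤ W i * W j := by
    calc V i * V j ≤ |V i * V j| := le_abs_self _
    _ = |V i| * |V j| := abs_mul _ _
    _ ≤ W i * W j := mul_le_mul (hV i) (hV j) (abs_nonneg _) (le_trans (abs_nonneg _) (hV i))
  exact mul_le_mul_of_nonpos_left hVV (hA i j)
end

section
/- Let m be a positive integer and let Q be an m×m real symmetric matrix that is negative definite, irreducible, and has nonnegative off-diagonal entries (Q i j ≥ 0 for all i ≠ j). Let A = Q⁻¹ and define the quadratic form F(V) = Vᵀ A V for V ∈ ℝ^m. Fix W ∈ ℝ^m with all entries nonnegative. If V ∈ ℝ^m satisfies |V i| ≤ W i for every index i and F(V) = F(W), then V = W or V = −W. -/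
open Matrix

/-- An `m × m` real matrix is irreducible if there is no nonempty proper subset `S`
of the index set such that `Q i j = 0` for all `i ∈ S` and `j ∉ S`. -/
def Matrix.IsIrreducibleReal {m : ℕ} (Q : Matrix (Fin m) (Fin m) ℝ) : Prop :=
  ¬ ∃ S : Set (Fin m), S.Nonempty ∧ S ≠ Set.univ ∧ ∀ i ∈ S, ∀ j ∉ S, Q i j = 0

lemma dp_expand {m : ℕ} (M : Matrix (Fin m) (Fin m) ℝ) (a c : Fin m → ℝ) :
    a ⬝ᵥ M.mulVec c = ∑ i, ∑ k, a i * (M i k * c k) := by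
  simp [dotProduct, Matrix.mulVec, Finset.mul_sum]

lemma dp_symm {m : ℕ} {M : Matrix (Fin m) (Fin m) ℝ} (hsym : M.IsSymm)
    (a c : Fin m → ℝ) : a ⬝ᵥ M.mulVec c = c ⬝ᵥ M.mulVec a := by
  rw [dp_expand, dp_expand, Finset.sum_comm]
  refine Finset.sum_congr rfl fun k _ => Finset.sum_congr rfl fun i _ => ?_
  rw [hsym.apply k i]
  ring

lemma key_nonneg {m : ℕ} (P : Matrix (Fin m) (Fin m) ℝ) (hsym : P.IsSymm)
    (hpos : ∀ v : Fin m → ℝ, v ≠ 0 → 0 < v ⬝ᵥ P.mulVec v)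
    (hoff : ∀ i j, i ≠ j → P i j ≤ 0)
    (x b : Fin m → ℝ) (hb : ∀ i, 0 ≤ b i) (hx : P.mulVec x = b) :
    ∀ i, 0 ≤ x i := by
  set y : Fin m → ℝ := fun i => |x i| with hy
  have hyx : y = x := by
    by_contra hne
    have hd : y - x ≠ 0 := sub_ne_zero.mpr hne
    have h1 : 0 < (y - x) ⬝ᵥ P.mulVec (y - x) := hpos _ hd
    have hexp : (y - x) ⬝ᵥ P.mulVec (y - x)
        = y ⬝ᵥ P.mulVec y - 2 * (x ⬝ᵥ P.mulVec y) + x ⬝ᵥ P.mulVec x := by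
      rw [Matrix.mulVec_sub, dotProduct_sub, sub_dotProduct, sub_dotProduct,
        dp_symm hsym y x]
      ring
    have hyy : y ⬝ᵥ P.mulVec y ≤ x ⬝ᵥ P.mulVec x := by
      rw [dp_expand, dp_expand]
      refine Finset.sum_le_sum fun i _ => Finset.sum_le_sum fun k _ => ?_
      rcases eq_or_ne i k with rfl | hik
      · have hyi : y i = |x i| := rfl
        rw [hyi]
        have habs := abs_mul_abs_self (x i)
        have e : |x i| * (P i i * |x i|) = x i * (P i i * x i) := by
          linear_combination P i i * habs
        exact e.le
      · have h2 : P i k ≤ 0 := hoff i k hik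
        have h3 : x i * x k ≤ |x i| * |x k| := by
          rw [← abs_mul]; exact le_abs_self _
        have hyi : y i = |x i| := rfl
        have hyk : y k = |x k| := rfl
        rw [hyi, hyk]
        nlinarith [h3, h2]
    have hbx : b ⬝ᵥ x ≤ b ⬝ᵥ y := by
      simp only [dotProduct]
      refine Finset.sum_le_sum fun i _ => ?_
      exact mul_le_mul_of_nonneg_left (le_abs_self (x i)) (hb i)
    have hxy : x ⬝ᵥ P.mulVec y = b ⬝ᵥ y := by
      rw [dp_symm hsym, hx, dotProduct_comm]
    have hxx : x ⬝ᵥ P.mulVec x = b ⬝ᵥ x := by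
      rw [hx, dotProduct_comm]
    linarith
  intro i
  have h := congrFun hyx i
  have : |x i| = x i := h
  rw [← this]
  exact abs_nonneg _

lemma inv_entries_neg {m : ℕ} (Q : Matrix (Fin m) (Fin m) ℝ)
    (hsym : Q.IsSymm)
    (hnegdef : ∀ V : Fin m → ℝ, V ≠ 0 → V ⬝ᵥ Q.mulVec V < 0)
    (hirr : Q.IsIrreducibleReal)
    (hoff : ∀ i j : Fin m, i ≠ j → 0 ≤ Q i j) :
    ∀ i j, Q⁻¹ i j < 0 := by
  intro i j
  set P : Matrix (Fin m) (Fin m) ℝ := -Q with hP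
  have hPsym : P.IsSymm := hsym.neg
  have hPpos : ∀ v : Fin m → ℝ, v ≠ 0 → 0 < v ⬝ᵥ P.mulVec v := by
    intro v hv
    have h := hnegdef v hv
    have : v ⬝ᵥ P.mulVec v = -(v ⬝ᵥ Q.mulVec v) := by
      rw [hP, Matrix.neg_mulVec, dotProduct_neg]
    rw [this]
    linarith
  have hPoff : ∀ a b, a ≠ b → P a b ≤ 0 := by
    intro a b hab
    have := hoff a b hab
    simp only [hP, Matrix.neg_apply]
    linarith
  have hdet : IsUnit Q.det := by
    rw [isUnit_iff_ne_zero]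
    intro h0
    obtain ⟨v, hv0, hv⟩ := (Matrix.exists_mulVec_eq_zero_iff).mpr h0
    have := hnegdef v hv0
    rw [hv, dotProduct_zero] at this
    exact lt_irrefl 0 this
  have hQinv : Q * Q⁻¹ = 1 := Matrix.mul_nonsing_inv Q hdet
  set x : Fin m → ℝ := fun k => -(Q⁻¹ k j) with hxdef
  set b : Fin m → ℝ := fun k => if k = j then 1 else 0 with hbdef
  have hb : ∀ k, 0 ≤ b k := by
    intro k
    rw [hbdef]
    dsimp only
    split <;> norm_num
  have hPx : P.mulVec x = b := by
    funext a
    have h1 : (Q * Q⁻¹) a j = (1 : Matrix (Fin m) (Fin m) ℝ) a j := by rw [hQinv]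
    rw [Matrix.mul_apply, Matrix.one_apply] at h1
    have h2 : P.mulVec x a = ∑ k, Q a k * Q⁻¹ k j := by
      simp [Matrix.mulVec, dotProduct, hP, hxdef]
    rw [h2, h1, hbdef]
  have hxnn : ∀ k, 0 ≤ x k := key_nonneg P hPsym hPpos hPoff x b hb hPx
  suffices hx : 0 < x i by
    have : x i = -(Q⁻¹ i j) := rfl
    linarith [this ▸ hx]
  by_contra hxi
  have hxi0 : x i = 0 := le_antisymm (not_lt.mp hxi) (hxnn i)
  have hsum : ∀ a, b a = ∑ k, P a k * x k := by
    intro a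
    rw [← hPx]
    simp [Matrix.mulVec, dotProduct]
  have hterm : ∀ a, x a = 0 → ∀ k, P a k * x k ≤ 0 := by
    intro a ha k
    rcases eq_or_ne k a with rfl | hka
    · rw [ha]; simp
    · have := hPoff a k hka.symm
      have := hxnn k
      nlinarith
  have hbnonpos : ∀ a, x a = 0 → b a ≤ 0 := by
    intro a ha
    rw [hsum a]
    exact Finset.sum_nonpos (fun k _ => hterm a ha k)
  have hjS : x j ≠ 0 := by
    intro hj
    have h := hbnonpos j hj
    rw [hbdef] at h
    simp at h
    linarith
  refine hirr ⟨{k | x k = 0}, ⟨i, hxi0⟩, ?_, ?_⟩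
  · intro hSuniv
    exact hjS (by have : j ∈ ({k | x k = 0} : Set (Fin m)) := hSuniv ▸ Set.mem_univ j; exact this)
  · intro a ha k hk
    have haj : a ≠ j := by intro h; exact hjS (h ▸ ha)
    have hba : b a = 0 := by rw [hbdef]; simp [haj]
    have hsum0 : ∑ l, P a l * x l = 0 := by rw [← hsum a, hba]
    have heach := (Finset.sum_eq_zero_iff_of_nonpos
      (fun l _ => hterm a ha l)).mp hsum0 k (Finset.mem_univ k)
    have hxk : x k ≠ 0 := hk
    have hPak : P a k = 0 := by
      rcases mul_eq_zero.mp heach with h | h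
      · exact h
      · exact absurd h hxk
    have : -Q a k = 0 := hPak
    linarith

theorem stmt_1 (m : ℕ) (hm : 0 < m) (Q : Matrix (Fin m) (Fin m) ℝ)
    (hsym : Q.IsSymm)
    (hnegdef : ∀ V : Fin m → ℝ, V ≠ 0 → V ⬝ᵥ Q.mulVec V < 0)
    (hirr : Q.IsIrreducibleReal)
    (hoff : ∀ i j : Fin m, i ≠ j → 0 ≤ Q i j)
    (W : Fin m → ℝ) (hW : ∀ i, 0 ≤ W i)
    (V : Fin m → ℝ) (hV : ∀ i, |V i| ≤ W i)
    (heq : V ⬝ᵥ (Q⁻¹).mulVec V = W ⬝ᵥ (Q⁻¹).mulVec W) :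
    V = W ∨ V = -W := by
  set A : Matrix (Fin m) (Fin m) ℝ := Q⁻¹ with hA
  have hAneg : ∀ i j, A i j < 0 := inv_entries_neg Q hsym hnegdef hirr hoff
  -- termwise inequality : W i * (A i k * W k) ≤ V i * (A i k * V k)
  have hVW : ∀ i k, V i * V k ≤ W i * W k := by
    intro i k
    calc V i * V k ≤ |V i * V k| := le_abs_self _
      _ = |V i| * |V k| := abs_mul _ _
      _ ≤ W i * W k := mul_le_mul (hV i) (hV k) (abs_nonneg _) (hW i)
  have hle : ∀ i k : Fin m, W i * (A i k * W k) ≤ V i * (A i k * V k) := by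
    intro i k
    have h1 := mul_le_mul_of_nonpos_left (hVW i k) (hAneg i k).le
    nlinarith [h1]
  have hsum : ∑ i, ∑ k, W i * (A i k * W k) = ∑ i, ∑ k, V i * (A i k * V k) := by
    rw [← dp_expand, ← dp_expand, heq]
  have houter : ∀ i ∈ Finset.univ, (∑ k, W i * (A i k * W k)) ≤ ∑ k, V i * (A i k * V k) :=
    fun i _ => Finset.sum_le_sum (fun k _ => hle i k)
  have heach : ∀ i k : Fin m, W i * (A i k * W k) = V i * (A i k * V k) := by
    intro i k
    have h1 := (Finset.sum_eq_sum_iff_of_le houter).mp hsum i (Finset.mem_univ i)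
    exact (Finset.sum_eq_sum_iff_of_le (fun k _ => hle i k)).mp h1 k (Finset.mem_univ k)
  have hkey : ∀ i k : Fin m, V i * V k = W i * W k := by
    intro i k
    have h2 : A i k * (V i * V k) = A i k * (W i * W k) := by
      linear_combination (heach i k).symm
    exact mul_left_cancel₀ (hAneg i k).ne h2
  have habs : ∀ i, |V i| = W i := by
    intro i
    have h := hkey i i
    have h2 : |V i| * |V i| = W i * W i := by
      rw [← abs_mul, h, abs_of_nonneg (mul_nonneg (hW i) (hW i))]
    nlinarith [abs_nonneg (V i), hW i]
  by_cases hp : ∃ i, 0 < V i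
  · obtain ⟨i0, hi0⟩ := hp
    left
    funext k
    have hWi0 : W i0 = V i0 := by rw [← habs i0, abs_of_pos hi0]
    have h := hkey i0 k
    rw [hWi0] at h
    have hWk : W k = |V k| := (habs k).symm
    have h2 : V i0 * V k = V i0 * W k := h
    have := mul_left_cancel₀ (ne_of_gt hi0) h2
    exact this
  · push_neg at hp
    right
    funext k
    have h : V k ≤ 0 := hp k
    have : |V k| = -(V k) := abs_of_nonpos h
    have h2 := habs k
    rw [this] at h2
    simp only [Pi.neg_apply]
    linarith
end

section
/- Let m be a positive integer and let A be an m×m real symmetric matrix all of whose entries are strictly negative. Fix W ∈ ℝ^m with all entries nonnegative. Then for every V ∈ ℝ^m satisfying |V i| ≤ W i for every index i, one has Wᵀ A W ≤ Vᵀ A V; moreover, if Wᵀ A W = Vᵀ A V then V = W or V = −W. -/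
open Matrix

theorem stmt_2 (m : ℕ) (hm : 0 < m) (A : Matrix (Fin m) (Fin m) ℝ)
    (hsym : A.IsSymm)
    (hneg : ∀ i j : Fin m, A i j < 0)
    (W : Fin m → ℝ) (hW : ∀ i, 0 ≤ W i)
    (V : Fin m → ℝ) (hV : ∀ i, |V i| ≤ W i) :
    W ⬝ᵥ A.mulVec W ≤ V ⬝ᵥ A.mulVec V ∧
      (W ⬝ᵥ A.mulVec W = V ⬝ᵥ A.mulVec V → V = W ∨ V = -W) := by
  have h1 : ∀ i, 0 ≤ W i + V i := fun i => by
    have := (abs_le.mp (hV i)).1; linarith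
  have h2 : ∀ i, 0 ≤ W i - V i := fun i => by
    have := (abs_le.mp (hV i)).2; linarith
  have hAsym : ∀ i j, A j i = A i j := fun i j => hsym.apply i j
  set S : ℝ := ∑ i, ∑ j, (W i + V i) * A i j * (W j - V j) with hSdef
  have hterm : ∀ i j, (W i + V i) * A i j * (W j - V j) ≤ 0 := fun i j =>
    mul_nonpos_of_nonpos_of_nonneg
      (mul_nonpos_of_nonneg_of_nonpos (h1 i) (hneg i j).le) (h2 j)
  have hS0 : S ≤ 0 :=
    Finset.sum_nonpos fun i _ => Finset.sum_nonpos fun j _ => hterm i j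
  have hcross : ∑ i, ∑ j, V i * A i j * W j = ∑ i, ∑ j, W i * A i j * V j := by
    rw [Finset.sum_comm]
    refine Finset.sum_congr rfl fun i _ => Finset.sum_congr rfl fun j _ => ?_
    rw [hAsym]; ring
  have hkey : W ⬝ᵥ A.mulVec W - V ⬝ᵥ A.mulVec V = S := by
    have expand : S = (∑ i, ∑ j, (W i * A i j * W j - V i * A i j * V j))
        + ((∑ i, ∑ j, V i * A i j * W j) - (∑ i, ∑ j, W i * A i j * V j)) := by
      rw [hSdef]
      simp only [← Finset.sum_sub_distrib, ← Finset.sum_add_distrib]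
      refine Finset.sum_congr rfl fun i _ => Finset.sum_congr rfl fun j _ => ?_
      ring
    rw [expand, hcross, sub_self, add_zero]
    simp only [dotProduct, mulVec, Finset.mul_sum, ← Finset.sum_sub_distrib]
    refine Finset.sum_congr rfl fun i _ => Finset.sum_congr rfl fun j _ => ?_
    ring
  constructor
  · linarith
  · intro heq
    have hS : S = 0 := by linarith
    have hall : ∀ i ∈ Finset.univ, ∀ j ∈ Finset.univ,
        (W i + V i) * A i j * (W j - V j) = 0 := by
      have h0 : ∀ i ∈ (Finset.univ : Finset (Fin m)),
          ∑ j, (W i + V i) * A i j * (W j - V j) = 0 :=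
        (Finset.sum_eq_zero_iff_of_nonpos
          (fun i _ => Finset.sum_nonpos fun j _ => hterm i j)).mp hS
      intro i hi j hj
      exact (Finset.sum_eq_zero_iff_of_nonpos (fun j _ => hterm i j)).mp (h0 i hi) j hj
    by_contra hcon
    push_neg at hcon
    obtain ⟨hVW, hVnW⟩ := hcon
    obtain ⟨j, hj⟩ : ∃ j, W j - V j ≠ 0 := by
      by_contra h; push_neg at h
      exact hVW (funext fun j => by have := h j; linarith)
    obtain ⟨i, hi⟩ : ∃ i, W i + V i ≠ 0 := by
      by_contra h; push_neg at h
      refine hVnW (funext fun i => ?_)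
      have := h i; simp only [Pi.neg_apply]; linarith
    have := hall i (Finset.mem_univ i) j (Finset.mem_univ j)
    exact (mul_ne_zero (mul_ne_zero hi (hneg i j).ne) hj) this
end

section
/- Let m be a positive integer and let Q be an m×m real symmetric matrix that is negative definite, irreducible, and has nonnegative off-diagonal entries (Q i j ≥ 0 for all i ≠ j). Then every entry of the inverse matrix Q⁻¹ is strictly negative. -/
open Matrix

theorem stmt_3 (m : ℕ) (hm : 0 < m) (Q : Matrix (Fin m) (Fin m) ℝ)
    (hsym : Q.IsSymm)
    (hnegdef : ∀ V : Fin m → ℝ, V ≠ 0 → V ⬝ᵥ Q.mulVec V < 0)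
    (hirr : Q.IsIrreducibleReal)
    (hoff : ∀ i j : Fin m, i ≠ j → 0 ≤ Q i j) :
    ∀ i j : Fin m, Q⁻¹ i j < 0 := by
  have hinj : Function.Injective Q.mulVec := by
    intro u v huv
    by_contra hne
    have h0 : Q.mulVec (u - v) = 0 := by rw [Matrix.mulVec_sub, huv, sub_self]
    have := hnegdef (u - v) (sub_ne_zero.mpr hne)
    rw [h0] at this
    simp at this
  have hdet : IsUnit Q.det :=
    (Matrix.isUnit_iff_isUnit_det Q).mp (Matrix.mulVec_injective_iff_isUnit.mp hinj)
  have hQQ : Q * Q⁻¹ = 1 := Matrix.mul_nonsing_inv Q hdet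
  intro i j
  set x : Fin m → ℝ := fun k => -(Q⁻¹ k j) with hxdef
  have hQx : ∀ k, Q.mulVec x k = -(if k = j then (1:ℝ) else 0) := by
    intro k
    have h1 : Q.mulVec (fun l => Q⁻¹ l j) k = (Q * Q⁻¹) k j := by
      simp [Matrix.mulVec, Matrix.mul_apply, dotProduct]
    have h2 : Q.mulVec x = -(Q.mulVec fun l => Q⁻¹ l j) := by
      have hx : x = -(fun l => Q⁻¹ l j) := by funext l; simp [hxdef]
      rw [hx, Matrix.mulVec_neg]
    rw [h2]
    simp only [Pi.neg_apply, h1, hQQ, Matrix.one_apply]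
  -- nonnegativity of x
  set p : Fin m → ℝ := fun k => max (x k) 0 with hpdef
  set n : Fin m → ℝ := fun k => max (-(x k)) 0 with hndef
  have hpn : ∀ k, x k = p k - n k := by
    intro k; simp only [hpdef, hndef, max_def]; split_ifs with h1 h2 <;> simp <;> linarith
  have hp0 : ∀ k, 0 ≤ p k := fun k => le_max_right _ _
  have hn0 : ∀ k, 0 ≤ n k := fun k => le_max_right _ _
  have hpnz : ∀ k, p k * n k = 0 := by
    intro k
    rcases le_or_gt (x k) 0 with h | h
    · have : p k = 0 := by simp [hpdef, max_eq_right h]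
      rw [this, zero_mul]
    · have : n k = 0 := by simp [hndef]; linarith
      rw [this, mul_zero]
  have hxeq : x = p - n := by funext k; simpa using hpn k
  have hnQp : 0 ≤ n ⬝ᵥ Q.mulVec p := by
    have hrw : n ⬝ᵥ Q.mulVec p = ∑ k, ∑ l, n k * (Q k l * p l) := by
      simp [dotProduct, Matrix.mulVec, Finset.mul_sum]
    rw [hrw]
    apply Finset.sum_nonneg; intro k _
    apply Finset.sum_nonneg; intro l _
    rcases eq_or_ne k l with rfl | hkl
    · rcases mul_eq_zero.mp (hpnz k) with h | h <;> rw [h] <;> ring_nf <;> simp [h]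
    · exact mul_nonneg (hn0 k) (mul_nonneg (hoff k l hkl) (hp0 l))
  have hnn : n = 0 := by
    by_contra hne
    have hlt := hnegdef n hne
    have h1 : n ⬝ᵥ Q.mulVec x = n ⬝ᵥ Q.mulVec p - n ⬝ᵥ Q.mulVec n := by
      rw [hxeq, Matrix.mulVec_sub, dotProduct_sub]
    have h2 : n ⬝ᵥ Q.mulVec x = -(n j) := by
      have : n ⬝ᵥ Q.mulVec x = ∑ k, n k * Q.mulVec x k := rfl
      rw [this]
      have : ∀ k, n k * Q.mulVec x k = -(if k = j then n k else 0) := by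
        intro k; rw [hQx k]; split_ifs <;> ring
      simp only [this, Finset.sum_neg_distrib, Finset.sum_ite_eq', Finset.mem_univ, if_true]
    have : 0 ≤ n ⬝ᵥ Q.mulVec n := by
      have := hn0 j
      linarith [h1, h2, hnQp]
    linarith
  have hx0 : ∀ k, 0 ≤ x k := by
    intro k; rw [hpn k, hnn]; simpa using hp0 k
  -- strict positivity via irreducibility
  have hxne : x ≠ 0 := by
    intro h
    have := hQx j
    rw [h] at this
    simp [Matrix.mulVec_zero] at this
  by_contra hcon
  push_neg at hcon
  have hxi : x i = 0 := le_antisymm (by simpa [hxdef] using hcon) (hx0 i)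
  set S : Set (Fin m) := {k | x k = 0} with hSdef
  apply hirr
  refine ⟨S, ⟨i, hxi⟩, ?_, ?_⟩
  · intro hS
    apply hxne
    funext k
    have : k ∈ S := hS ▸ Set.mem_univ k
    exact this
  · intro a ha b hb
    -- for a ∈ S : 0 ≤ (Q *ᵥ x) a = -(δ a j) ≤ 0, each term Q a l * x l ≥ 0 for l ∉ S, = 0 for l ∈ S
    have hterm : ∀ l, 0 ≤ Q a l * x l := by
      intro l
      rcases eq_or_ne a l with rfl | hal
      · rw [ha]; simp
      · exact mul_nonneg (hoff a l hal) (hx0 l)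
    have hsum0 : ∑ l, Q a l * x l = 0 := by
      have hle : ∑ l, Q a l * x l ≤ 0 := by
        have := hQx a
        have hmv : Q.mulVec x a = ∑ l, Q a l * x l := rfl
        rw [hmv] at this
        rw [this]
        split_ifs <;> norm_num
      have hge : 0 ≤ ∑ l, Q a l * x l := Finset.sum_nonneg fun l _ => hterm l
      linarith
    have heach := (Finset.sum_eq_zero_iff_of_nonneg (fun l _ => hterm l)).mp hsum0
    have hb' : Q a b * x b = 0 := heach b (Finset.mem_univ b)
    have hxb : x b ≠ 0 := hb
    rcases mul_eq_zero.mp hb' with h | h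
    · exact h
    · exact absurd h hxb
end
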